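/- For every prime p ≥ 5, the sum ∑_{n=0}^{p-1} C_n of Catalan numbers is congruent to 1 modulo p^2 if p ≡ 1 (mod 3), and congruent to -2 modulo p^2 if p ≡ 2 (mod 3). -/

import Mathlib

open Finset

namespace CatalanSumAux

/-! ### The integer sums `g a n = ∑_{d ≡ a mod 3} (n choose d)` and their differences -/

noncomputable def g (a n : ℕ) : ℤ :=
  ∑ d ∈ range (n + 1), if d % 3 = a then (n.choose d : ℤ) else 0

lemma g_rec (a b n : ℕ) (hab : ∀ k : ℕ, (k + 1) % 3 = a ↔ k % 3 = b) :
    g a (n + 1) = g a n + g b n := by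
  have key : ∀ i ∈ range (n + 1),
      (if (i + 1) % 3 = a then ((n + 1).choose (i + 1) : ℤ) else 0) =
        (if i % 3 = b then (n.choose i : ℤ) else 0) +
          (if (i + 1) % 3 = a then (n.choose (i + 1) : ℤ) else 0) := by
    intro i _
    by_cases h : (i + 1) % 3 = a
    · rw [if_pos h, if_pos h, if_pos ((hab i).mp h), Nat.choose_succ_succ]
      push_cast
      ring
    · rw [if_neg h, if_neg h, if_neg (fun hh => h ((hab i).mpr hh)), zero_add]
  have h1 := Finset.sum_range_succ'
    (fun d => if d % 3 = a then ((n + 1).choose d : ℤ) else 0) (n + 1)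
  have h2 := Finset.sum_range_succ'
    (fun d => if d % 3 = a then (n.choose d : ℤ) else 0) (n + 1)
  have hg1 : g a (n + 1)
      = ∑ d ∈ range (n + 1 + 1), (if d % 3 = a then ((n + 1).choose d : ℤ) else 0) := rfl
  have hg2 : ∑ d ∈ range (n + 1 + 1), (if d % 3 = a then (n.choose d : ℤ) else 0) = g a n := by
    rw [Finset.sum_range_succ]
    have hz : (if (n + 1) % 3 = a then (n.choose (n + 1) : ℤ) else 0) = 0 := by
      rw [Nat.choose_eq_zero_of_lt (Nat.lt_succ_self n)]
      simp
    rw [hz, add_zero]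
    rfl
  have hsum := Finset.sum_congr rfl key
  rw [Finset.sum_add_distrib] at hsum
  have hgb : ∑ i ∈ range (n + 1), (if i % 3 = b then (n.choose i : ℤ) else 0) = g b n := rfl
  have e0 : (if 0 % 3 = a then ((n + 1).choose 0 : ℤ) else 0)
      = (if 0 % 3 = a then (n.choose 0 : ℤ) else 0) := by simp
  rw [hg1, h1, hsum, hgb, e0]
  have e1 : ∑ i ∈ range (n + 1), (if (i + 1) % 3 = a then (n.choose (i + 1) : ℤ) else 0)
      = g a n - (if 0 % 3 = a then (n.choose 0 : ℤ) else 0) := by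
    rw [← hg2, h2]
    ring
  rw [e1]
  ring

lemma g_rec0 (n : ℕ) : g 0 (n + 1) = g 0 n + g 2 n := g_rec 0 2 n (by omega)
lemma g_rec1 (n : ℕ) : g 1 (n + 1) = g 1 n + g 0 n := g_rec 1 0 n (by omega)
lemma g_rec2 (n : ℕ) : g 2 (n + 1) = g 2 n + g 1 n := g_rec 2 1 n (by omega)

def Xt : ℕ → ℤ
  | 0 => 1 | 1 => 0 | 2 => -1 | 3 => -1 | 4 => 0 | 5 => 1 | _ => 0

def Yt : ℕ → ℤ
  | 0 => 0 | 1 => 1 | 2 => 1 | 3 => 0 | 4 => -1 | 5 => -1 | _ => 0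

lemma g_table (n : ℕ) : g 0 n - g 1 n = Xt (n % 6) ∧ g 1 n - g 2 n = Yt (n % 6) := by
  induction n with
  | zero =>
      constructor <;> simp [g, Xt, Yt]
  | succ n ih =>
      obtain ⟨ihX, ihY⟩ := ih
      have h0 := g_rec0 n
      have h1 := g_rec1 n
      have h2 := g_rec2 n
      have e1 : g 0 (n + 1) - g 1 (n + 1) = -(g 1 n - g 2 n) := by linarith
      have e2 : g 1 (n + 1) - g 2 (n + 1) = (g 0 n - g 1 n) + (g 1 n - g 2 n) := by linarith
      have hm : n % 6 = 0 ∨ n % 6 = 1 ∨ n % 6 = 2 ∨ n % 6 = 3 ∨ n % 6 = 4 ∨ n % 6 = 5 := by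
        omega
      rcases hm with h | h | h | h | h | h
      · have h6 : (n + 1) % 6 = 1 := by omega
        rw [h] at ihX ihY; rw [h6]
        simp only [Xt, Yt] at ihX ihY ⊢
        exact ⟨by linarith, by linarith⟩
      · have h6 : (n + 1) % 6 = 2 := by omega
        rw [h] at ihX ihY; rw [h6]
        simp only [Xt, Yt] at ihX ihY ⊢
        exact ⟨by linarith, by linarith⟩
      · have h6 : (n + 1) % 6 = 3 := by omega
        rw [h] at ihX ihY; rw [h6]
        simp only [Xt, Yt] at ihX ihY ⊢
        exact ⟨by linarith, by linarith⟩
      · have h6 : (n + 1) % 6 = 4 := by omega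
        rw [h] at ihX ihY; rw [h6]
        simp only [Xt, Yt] at ihX ihY ⊢
        exact ⟨by linarith, by linarith⟩
      · have h6 : (n + 1) % 6 = 5 := by omega
        rw [h] at ihX ihY; rw [h6]
        simp only [Xt, Yt] at ihX ihY ⊢
        exact ⟨by linarith, by linarith⟩
      · have h6 : (n + 1) % 6 = 0 := by omega
        rw [h] at ihX ihY; rw [h6]
        simp only [Xt, Yt] at ihX ihY ⊢
        exact ⟨by linarith, by linarith⟩

/-! ### Trisection of a sum -/

lemma trisect {M : Type*} [AddCommMonoid M] (f : ℕ → M) (m : ℕ) :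
    ∑ d ∈ range (3 * m), f d = ∑ j ∈ range m, (f (3 * j) + f (3 * j + 1) + f (3 * j + 2)) := by
  induction m with
  | zero => simp
  | succ m ih =>
      have h3 : 3 * (m + 1) = (3 * m + 1) + 1 + 1 := by ring
      rw [h3, Finset.sum_range_succ, Finset.sum_range_succ, Finset.sum_range_succ,
        Finset.sum_range_succ, ih]
      abel

end CatalanSumAux

open CatalanSumAux

section Main

variable (p : ℕ)

/-- `S p d = ∑_{k<p} C(2k, k+d)` in `ZMod p²`. -/
noncomputable def Sb (d : ℕ) : ZMod (p ^ 2) :=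
  ∑ k ∈ range p, ((2 * k).choose (k + d) : ZMod (p ^ 2))

lemma pascal2 (k d : ℕ) :
    (2 * (k + 1)).choose ((k + 1) + (d + 1)) =
      (2 * k).choose (k + d) + 2 * ((2 * k).choose (k + d + 1)) + (2 * k).choose (k + d + 2) := by
  have e1 : 2 * (k + 1) = (2 * k + 1) + 1 := by ring
  have e2 : (k + 1) + (d + 1) = (k + d + 1) + 1 := by ring
  rw [e1, e2, Nat.choose_succ_succ (2 * k + 1) (k + d + 1),
    Nat.choose_succ_succ (2 * k) (k + d),
    Nat.choose_succ_succ (2 * k) (k + d + 1)]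
  have e3 : k + d + 1 + 1 = k + d + 2 := rfl
  rw [e3]
  ring

lemma Sb_rec (d : ℕ) :
    Sb p (d + 2) + Sb p (d + 1) + Sb p d = ((2 * p).choose (p + (d + 1)) : ZMod (p ^ 2)) := by
  classical
  set R := ZMod (p ^ 2)
  set f : ℕ → R := fun k => ((2 * k).choose (k + (d + 1)) : R) with hf
  have hsum : ∑ k ∈ range p, f (k + 1) = Sb p (d + 1) + f p - f 0 := by
    have := Finset.sum_range_succ' f p
    rw [Finset.sum_range_succ] at this
    -- this : ∑ k ∈ range p, f k + f p = ∑ i ∈ range p, f (i+1) + f 0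
    have hS : Sb p (d + 1) = ∑ k ∈ range p, f k := rfl
    rw [hS]
    linear_combination -this
  have hterm : ∀ k ∈ range p, f (k + 1) =
      ((2 * k).choose (k + d) : R) + 2 * ((2 * k).choose (k + d + 1) : R)
        + ((2 * k).choose (k + d + 2) : R) := by
    intro k _
    have := pascal2 k d
    have hc : ((2 * (k + 1)).choose ((k + 1) + (d + 1)) : R)
        = (((2 * k).choose (k + d) + 2 * ((2 * k).choose (k + d + 1))
            + (2 * k).choose (k + d + 2) : ℕ) : R) := by exact_mod_cast congrArg _ this
    rw [hf]
    push_cast at hc ⊢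
    rw [Nat.cast_mul, Nat.cast_ofNat] at hc
    exact hc
  have hsplit : ∑ k ∈ range p, f (k + 1) = Sb p d + 2 * Sb p (d + 1) + Sb p (d + 2) := by
    rw [Finset.sum_congr rfl hterm]
    rw [Finset.sum_add_distrib, Finset.sum_add_distrib, ← Finset.mul_sum]
    have h1 : Sb p d = ∑ k ∈ range p, ((2 * k).choose (k + d) : R) := rfl
    have h2 : ∑ k ∈ range p, ((2 * k).choose (k + d + 1) : R) = Sb p (d + 1) := by
      apply Finset.sum_congr rfl
      intro k _
      rw [show k + d + 1 = k + (d + 1) from by ring]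
    have h3 : ∑ k ∈ range p, ((2 * k).choose (k + d + 2) : R) = Sb p (d + 2) := by
      apply Finset.sum_congr rfl
      intro k _
      rw [show k + d + 2 = k + (d + 2) from by ring]
    rw [h1, h2, h3]
  have hf0 : f 0 = 0 := by
    rw [hf]
    simp [Nat.choose_eq_zero_of_lt]
  have hfp : f p = ((2 * p).choose (p + (d + 1)) : R) := rfl
  rw [hsplit, hfp, hf0] at hsum
  linear_combination hsum

lemma Sb_vanish (D : ℕ) (h : p ≤ D) : Sb p D = 0 := by
  rw [Sb]
  apply Finset.sum_eq_zero
  intro k hk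
  rw [Finset.mem_range] at hk
  rw [Nat.choose_eq_zero_of_lt (by omega)]
  exact Nat.cast_zero

lemma Sb_telescope (M : ℕ) :
    Sb p (3 * M) = Sb p 0 + ∑ j ∈ range M,
      (((2 * p).choose (p + (3 * j + 2)) : ZMod (p ^ 2))
        - ((2 * p).choose (p + (3 * j + 1)) : ZMod (p ^ 2))) := by
  induction M with
  | zero => simp
  | succ M ih =>
      rw [Finset.sum_range_succ]
      have e1 := Sb_rec p (3 * M)
      have e2 := Sb_rec p (3 * M + 1)
      have h1 : 3 * (M + 1) = 3 * M + 1 + 2 := by ring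
      have h2 : 3 * M + 2 = 3 * M + 1 + 1 := rfl
      rw [h1]
      have e2' : Sb p (3 * M + 1 + 2) + Sb p (3 * M + 2) + Sb p (3 * M + 1)
          = ((2 * p).choose (p + (3 * M + 2)) : ZMod (p ^ 2)) := by
        rw [h2] at e2 ⊢
        exact e2
      rw [ih] at e1
      linear_combination e2' - e1

/-! ### The key congruence `C(2p, p+d) ≡ 2 C(p,d) mod p²` for `0 ≤ d < p` -/

lemma key1 (hp : p.Prime) (d : ℕ) (hd : d < p) :
    (((2 * p).choose (p + d) : ZMod (p ^ 2))) = 2 * (p.choose d : ZMod (p ^ 2)) := by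
  classical
  have hv : (2 * p).choose (p + d)
      = ∑ i ∈ range (p + d + 1), p.choose i * p.choose (p + d - i) := by
    have := Nat.add_choose_eq p p (p + d)
    rw [Finset.Nat.sum_antidiagonal_eq_sum_range_succ_mk] at this
    rw [two_mul]
    exact this
  rw [hv]
  push_cast
  have hne : d ≠ p := by omega
  have hsub : ({d, p} : Finset ℕ) ⊆ range (p + d + 1) := by
    intro x hx
    simp only [Finset.mem_insert, Finset.mem_singleton] at hx
    rcases hx with rfl | rfl <;> (rw [Finset.mem_range]; omega)
  have hzero : ∀ x ∈ range (p + d + 1), x ∉ ({d, p} : Finset ℕ) →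
      ((p.choose x : ZMod (p ^ 2)) * (p.choose (p + d - x) : ZMod (p ^ 2))) = 0 := by
    intro i hir hinot
    simp only [Finset.mem_insert, Finset.mem_singleton, not_or] at hinot
    obtain ⟨hid, hip⟩ := hinot
    rw [Finset.mem_range] at hir
    by_cases hcase : p < i
    · rw [Nat.choose_eq_zero_of_lt hcase]
      simp
    by_cases hcase2 : i < d
    · rw [Nat.choose_eq_zero_of_lt (show p < p + d - i by omega)]
      simp
    have hdvd1 : p ∣ p.choose i := hp.dvd_choose_self (by omega) (by omega)
    have hdvd2 : p ∣ p.choose (p + d - i) := hp.dvd_choose_self (by omega) (by omega)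
    rw [← Nat.cast_mul, ZMod.natCast_eq_zero_iff]
    calc p ^ 2 = p * p := sq p
    _ ∣ p.choose i * p.choose (p + d - i) := mul_dvd_mul hdvd1 hdvd2
  rw [← Finset.sum_subset hsub hzero, Finset.sum_pair hne]
  simp only [Nat.add_sub_cancel, Nat.add_sub_cancel_left, Nat.choose_self, Nat.cast_one]
  ring

end Main

/-! ### Central binomial sum mod p² -/

lemma central_sum (p : ℕ) (hp : p.Prime) (hp5 : 5 ≤ p) :
    (p % 3 = 1 → (∑ k ∈ range p, ((2 * k).choose k : ZMod (p ^ 2))) = 1) ∧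
    (p % 3 = 2 → (∑ k ∈ range p, ((2 * k).choose k : ZMod (p ^ 2))) = -1) := by
  classical
  have hSb0 : Sb p 0 = ∑ k ∈ range p, ((2 * k).choose k : ZMod (p ^ 2)) := by
    rw [Sb]
    apply Finset.sum_congr rfl
    intro k _
    norm_num
  have hodd : p % 2 = 1 := Nat.odd_iff.mp (hp.odd_of_ne_two (by omega))
  -- the W-sum in ℤ
  have hW : ∀ M : ℕ, p < 3 * M →
      (∑ j ∈ range M, ((p.choose (3 * j + 2) : ℤ) - (p.choose (3 * j + 1) : ℤ)))
        = g 2 p - g 1 p := by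
    intro M hM
    set F : ℕ → ℤ := fun d =>
      (if d % 3 = 2 then (p.choose d : ℤ) else 0) - (if d % 3 = 1 then (p.choose d : ℤ) else 0)
      with hF
    have hper : ∀ j, F (3 * j) + F (3 * j + 1) + F (3 * j + 2)
        = (p.choose (3 * j + 2) : ℤ) - (p.choose (3 * j + 1) : ℤ) := by
      intro j
      rw [hF]
      have m0 : (3 * j) % 3 = 0 := by omega
      have m1 : (3 * j + 1) % 3 = 1 := by omega
      have m2 : (3 * j + 2) % 3 = 2 := by omega
      simp only [m0, m1, m2]
      norm_num
      try ring
    calc ∑ j ∈ range M, ((p.choose (3 * j + 2) : ℤ) - (p.choose (3 * j + 1) : ℤ))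
        = ∑ j ∈ range M, (F (3 * j) + F (3 * j + 1) + F (3 * j + 2)) := by
          exact (Finset.sum_congr rfl fun j _ => (hper j).symm)
      _ = ∑ d ∈ range (3 * M), F d := (trisect F M).symm
      _ = ∑ d ∈ range (p + 1), F d := by
          symm
          apply Finset.sum_subset
          · intro x hx
            rw [Finset.mem_range] at hx ⊢
            omega
          · intro x _ hx
            rw [Finset.mem_range] at hx
            rw [hF]
            simp only
            rw [Nat.choose_eq_zero_of_lt (by omega)]
            simp
      _ = g 2 p - g 1 p := by
          rw [g, g, ← Finset.sum_sub_distrib]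
  constructor
  · -- p % 3 = 1, so p % 6 = 1
    intro h3
    have h6 : p % 6 = 1 := by omega
    have hg := g_table p
    rw [h6] at hg
    have hY : g 1 p - g 2 p = 1 := by simpa [Yt] using hg.2
    -- M with 3M = p + 2
    obtain ⟨m, hm⟩ : ∃ m, p = 3 * m + 1 := ⟨p / 3, by omega⟩
    set M := m + 1 with hM
    have h3M : 3 * M = p + 2 := by omega
    have htel := Sb_telescope p M
    have hvan : Sb p (3 * M) = 0 := Sb_vanish p _ (by omega)
    rw [hvan] at htel
    -- compute the telescoped sum
    rw [Finset.sum_range_succ] at htel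
    have hlast1 : p + (3 * m + 1) = 2 * p := by omega
    have hlast2 : p + (3 * m + 2) = 2 * p + 1 := by omega
    rw [hlast1, hlast2, Nat.choose_self, Nat.choose_eq_zero_of_lt (by omega)] at htel
    have hrest : ∀ j ∈ range m,
        (((2 * p).choose (p + (3 * j + 2)) : ZMod (p ^ 2))
          - ((2 * p).choose (p + (3 * j + 1)) : ZMod (p ^ 2)))
        = 2 * ((p.choose (3 * j + 2) : ZMod (p ^ 2)) - (p.choose (3 * j + 1) : ZMod (p ^ 2))) := by
      intro j hj
      rw [Finset.mem_range] at hj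
      rw [key1 p hp _ (by omega), key1 p hp _ (by omega)]
      ring
    rw [Finset.sum_congr rfl hrest, ← Finset.mul_sum] at htel
    -- the ℤ-sum over range M equals -1, and its last term is (0 - 1)
    have hWM := hW M (by omega)
    have hg2 : g 2 p - g 1 p = -1 := by
      have := hg.2
      simp [Yt] at this
      linarith
    rw [hg2, Finset.sum_range_succ] at hWM
    have hc1 : (3 * m + 1) = p := by omega
    have hc2 : p.choose (3 * m + 2) = 0 := Nat.choose_eq_zero_of_lt (by omega)
    rw [hc1, hc2, Nat.choose_self] at hWM
    push_cast at hWM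
    -- hWM : ∑_{j<m} (c(3j+2) - c(3j+1)) + (0 - 1) = -1
    have hZ : (∑ j ∈ range m, ((p.choose (3 * j + 2) : ℤ) - (p.choose (3 * j + 1) : ℤ))) = 0 := by
      linarith
    have hZR : (∑ j ∈ range m,
        ((p.choose (3 * j + 2) : ZMod (p ^ 2)) - (p.choose (3 * j + 1) : ZMod (p ^ 2)))) = 0 := by
      have := congrArg (fun z : ℤ => (z : ZMod (p ^ 2))) hZ
      push_cast at this
      exact this
    rw [hZR] at htel
    rw [hSb0] at htel
    push_cast at htel
    linear_combination -htel
  · -- p % 3 = 2, so p % 6 = 5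
    intro h3
    have h6 : p % 6 = 5 := by omega
    have hg := g_table p
    rw [h6] at hg
    -- M with 3M = p + 1
    obtain ⟨m, hm⟩ : ∃ m, p = 3 * m + 2 := ⟨p / 3, by omega⟩
    set M := m + 1 with hM
    have h3M : 3 * M = p + 1 := by omega
    have htel := Sb_telescope p M
    have hvan : Sb p (3 * M) = 0 := Sb_vanish p _ (by omega)
    rw [hvan] at htel
    rw [Finset.sum_range_succ] at htel
    have hlast2 : p + (3 * m + 2) = 2 * p := by omega
    rw [hlast2, Nat.choose_self] at htel
    rw [key1 p hp (3 * m + 1) (by omega)] at htel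
    have hrest : ∀ j ∈ range m,
        (((2 * p).choose (p + (3 * j + 2)) : ZMod (p ^ 2))
          - ((2 * p).choose (p + (3 * j + 1)) : ZMod (p ^ 2)))
        = 2 * ((p.choose (3 * j + 2) : ZMod (p ^ 2)) - (p.choose (3 * j + 1) : ZMod (p ^ 2))) := by
      intro j hj
      rw [Finset.mem_range] at hj
      rw [key1 p hp _ (by omega), key1 p hp _ (by omega)]
      ring
    rw [Finset.sum_congr rfl hrest, ← Finset.mul_sum] at htel
    have hWM := hW M (by omega)
    have hg2 : g 2 p - g 1 p = 1 := by
      have := hg.2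
      simp [Yt] at this
      linarith
    rw [hg2, Finset.sum_range_succ] at hWM
    have hc2 : (3 * m + 2) = p := by omega
    rw [hc2, Nat.choose_self] at hWM
    -- hWM : ∑_{j<m} (...) + (1 - c(3m+1)) = 1
    have hZ : (∑ j ∈ range m, ((p.choose (3 * j + 2) : ℤ) - (p.choose (3 * j + 1) : ℤ)))
        = (p.choose (3 * m + 1) : ℤ) := by
      push_cast at hWM
      linarith
    have hZR : (∑ j ∈ range m,
        ((p.choose (3 * j + 2) : ZMod (p ^ 2)) - (p.choose (3 * j + 1) : ZMod (p ^ 2))))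
        = (p.choose (3 * m + 1) : ZMod (p ^ 2)) := by
      have := congrArg (fun z : ℤ => (z : ZMod (p ^ 2))) hZ
      push_cast at this
      exact this
    rw [hZR] at htel
    rw [hSb0] at htel
    push_cast at htel
    linear_combination -htel

lemma cat_id (k : ℕ) : 2 * catalan k + Nat.centralBinom (k + 1) = 4 * Nat.centralBinom k := by
  apply Nat.eq_of_mul_eq_mul_left (show 0 < k + 1 by omega)
  have h1 := succ_mul_catalan_eq_centralBinom k
  have h2 := Nat.succ_mul_centralBinom_succ k
  zify at h1 h2 ⊢
  linear_combination 2 * h1 + h2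

theorem sum_catalan_mod_p_sq (p : ℕ) (hp : p.Prime) (hp5 : 5 ≤ p) :
    (p % 3 = 1 → (∑ n ∈ Finset.range p, (catalan n : ZMod (p ^ 2))) = 1) ∧
    (p % 3 = 2 → (∑ n ∈ Finset.range p, (catalan n : ZMod (p ^ 2))) = -2) := by
  classical
  set R := ZMod (p ^ 2)
  have hodd : p % 2 = 1 := Nat.odd_iff.mp (hp.odd_of_ne_two (by omega))
  set A : R := ∑ k ∈ range p, ((2 * k).choose k : R) with hA
  set C : R := ∑ n ∈ Finset.range p, (catalan n : R) with hC
  -- key equation: 2 C = 3 A - 1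
  have hb : ∀ k : ℕ, (Nat.centralBinom k : R) = ((2 * k).choose k : R) := by
    intro k
    rw [Nat.centralBinom_eq_two_mul_choose]
  have hsum1 : ∑ k ∈ range p, ((2 * catalan k + Nat.centralBinom (k + 1) : ℕ) : R)
      = ∑ k ∈ range p, ((4 * Nat.centralBinom k : ℕ) : R) := by
    apply Finset.sum_congr rfl
    intro k _
    rw [cat_id]
  have hshift : ∑ k ∈ range p, (Nat.centralBinom (k + 1) : R)
      = A + (Nat.centralBinom p : R) - 1 := by
    have h := Finset.sum_range_succ' (fun k => (Nat.centralBinom k : R)) p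
    rw [Finset.sum_range_succ] at h
    have h0 : (Nat.centralBinom 0 : R) = 1 := by norm_num [Nat.centralBinom]
    rw [h0] at h
    have hAe : A = ∑ k ∈ range p, (Nat.centralBinom k : R) := by
      rw [hA]
      exact Finset.sum_congr rfl fun k _ => (hb k).symm
    rw [hAe]
    linear_combination -h
  have hbp : (Nat.centralBinom p : R) = 2 := by
    rw [Nat.centralBinom_eq_two_mul_choose]
    have := key1 p hp 0 (by omega)
    rw [Nat.add_zero, Nat.choose_zero_right] at this
    rw [this]
    norm_num
  have hkey : 2 * C = 3 * A - 1 := by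
    have hl : ∑ k ∈ range p, ((2 * catalan k + Nat.centralBinom (k + 1) : ℕ) : R)
        = 2 * C + (A + (Nat.centralBinom p : R) - 1) := by
      have h2C : (2 : R) * C = ∑ k ∈ range p, (2 : R) * (catalan k : R) := by
        rw [hC, Finset.mul_sum]
      push_cast
      rw [Finset.sum_add_distrib, ← hshift, h2C]
      try push_cast
      try ring
      congr 1
      exact Finset.sum_congr rfl fun k _ => by rw [Nat.cast_mul, mul_comm, Nat.cast_ofNat]
    have hr : ∑ k ∈ range p, ((4 * Nat.centralBinom k : ℕ) : R) = 4 * A := by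
      push_cast
      exact (Finset.mul_sum (range p) (fun k => (Nat.centralBinom k : R)) 4).symm
    rw [hl, hr, hbp] at hsum1
    linear_combination hsum1
  have hunit : IsUnit (2 : R) := by
    rw [show ((2 : R) = ((2 : ℕ) : R)) by norm_num]
    rw [ZMod.isUnit_iff_coprime]
    apply Nat.Coprime.pow_right
    rw [Nat.coprime_two_left]
    exact Nat.odd_iff.mpr hodd
  have hcs := central_sum p hp hp5
  constructor
  · intro h3
    have hA1 : A = 1 := hcs.1 h3
    have : (2 : R) * C = 2 * 1 := by rw [hkey, hA1]; ring
    exact hunit.mul_left_cancel this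
  · intro h3
    have hA1 : A = -1 := hcs.2 h3
    have : (2 : R) * C = 2 * (-2) := by rw [hkey, hA1]; ring
    exact hunit.mul_left_cancel this
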